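/- arXiv:2104.09063 — 3 statements merged into one kernel-verified Lean document; each statement's English description precedes it below -/
import Mathlib

section
/- For any word w over Σ with ι(w) = k ≥ 1 and any s ∈ ℕ, we have s·k ≤ ι(w^s) ≤ s·k + s − 1. -/
open List

variable {α : Type*}

/-- `w` is `k`-universal: every word of length `k` over the alphabet `α`
is a scattered factor (subsequence) of `w`. -/
def IsUniversal [Fintype α] (k : ℕ) (w : List α) : Prop :=
  ∀ u : List α, u.length = k → u.Sublist w

/-- The universality index `ι(w)`: the largest `k` such that `w` is `k`-universal. -/
noncomputable def univIndex [Fintype α] (w : List α) : ℕ :=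
  sSup {k | IsUniversal k w}

/-- The circular universality index `ζ(w)`: the largest `k` such that some
conjugate of `w` is `k`-universal. -/
noncomputable def circIndex [Fintype α] (w : List α) : ℕ :=
  sSup {k | ∃ u v : List α, w = u ++ v ∧ IsUniversal k (v ++ u)}

/-- `wpow w s = w^s`, the `s`-fold concatenation of `w`. -/
def wpow (w : List α) (s : ℕ) : List α := (List.replicate s w).flatten

/-- Auxiliary (fuelled) computation of the remainder of the arch factorisation:
greedily remove the shortest prefix containing every letter of the alphabet. -/
def remAux [Fintype α] [DecidableEq α] : ℕ → List α → List α
  | 0, w => w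
  | (n+1), w =>
    match (List.range' 1 w.length).find?
        (fun m => decide ((w.take m).toFinset = Finset.univ)) with
    | none => w
    | some m => remAux n (w.drop m)

/-- `rem w = r(w)`, the remainder of the arch factorisation of `w`. -/
def rem [Fintype α] [DecidableEq α] (w : List α) : List α := remAux w.length w

/-- Auxiliary (fuelled) computation of the list of arches of `w`. -/
def archesAux [Fintype α] [DecidableEq α] : ℕ → List α → List (List α)
  | 0, _ => []
  | (n+1), w =>
    match (List.range' 1 w.length).find?
        (fun m => decide ((w.take m).toFinset = Finset.univ)) with
    | none => []
    | some m => (w.take m) :: archesAux n (w.drop m)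

/-- `arches w`: the list `[arch₁(w), …, arch_{ι(w)}(w)]` of arches of `w`. -/
def arches [Fintype α] [DecidableEq α] (w : List α) : List (List α) :=
  archesAux w.length w

section Aux
variable [Fintype α]

lemma isUniversal_zero' (w : List α) : IsUniversal 0 w := by
  intro u hu
  simp [List.length_eq_zero_iff.mp hu]

lemma IsUniversal.mono' [Nonempty α] {m n : ℕ} {w : List α}
    (h : IsUniversal n w) (hmn : m ≤ n) : IsUniversal m w := by
  obtain ⟨a⟩ := ‹Nonempty α›
  intro u hu
  have h2 := h (u ++ List.replicate (n - m) a) (by simp [hu]; omega)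
  exact (List.sublist_append_left u _).trans h2

lemma IsUniversal.length_le' [Nonempty α] {m : ℕ} {w : List α}
    (h : IsUniversal m w) : m ≤ w.length := by
  obtain ⟨a⟩ := ‹Nonempty α›
  simpa using (h (List.replicate m a) (by simp)).length_le

lemma bddAbove_univSet [Nonempty α] (w : List α) :
    BddAbove {k | IsUniversal k w} :=
  ⟨w.length, fun _ h => h.length_le'⟩

lemma isUniversal_iff_le [Nonempty α] {m : ℕ} (w : List α) :
    IsUniversal m w ↔ m ≤ univIndex w := by
  constructor
  · intro h
    exact le_csSup (bddAbove_univSet w) h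
  · intro h
    have hne : {k | IsUniversal k w}.Nonempty := ⟨0, isUniversal_zero' w⟩
    have hmem := Nat.sSup_mem hne (bddAbove_univSet w)
    exact IsUniversal.mono' hmem h

lemma IsUniversal.append' {p q : ℕ} {u v : List α}
    (hu : IsUniversal p u) (hv : IsUniversal q v) :
    IsUniversal (p + q) (u ++ v) := by
  intro z hz
  have h1 : (z.take p).Sublist u := hu _ (by simp [hz])
  have h2 : (z.drop p).Sublist v := hv _ (by simp [hz])
  have := h1.append h2
  simpa [List.take_append_drop] using this

lemma isUniversal_append_split {p q : ℕ} {u v : List α}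
    (h : IsUniversal (p + q + 2) (u ++ v)) :
    IsUniversal (p + 1) u ∨ IsUniversal (q + 1) v := by
  by_cases hu : IsUniversal (p + 1) u
  · exact Or.inl hu
  · right
    obtain ⟨x, hx, hxu⟩ : ∃ x : List α, x.length = p + 1 ∧ ¬ x.Sublist u := by
      by_contra hc
      push_neg at hc
      exact hu fun x hx => hc x hx
    intro y hy
    have hz := h (x ++ y) (by simp [hx, hy]; omega)
    rw [List.sublist_append_iff] at hz
    obtain ⟨z₁, z₂, hsplit, h1, h2⟩ := hz
    rcases le_or_gt x.length z₁.length with hle | hlt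
    · exfalso
      apply hxu
      have hxeq : x = z₁.take x.length := by
        have := congrArg (fun l => List.take x.length l) hsplit
        simpa [List.take_left, List.take_append_of_le_length hle] using this
      rw [hxeq]
      exact (List.take_sublist _ _).trans h1
    · have hyeq : y = z₂.drop (x.length - z₁.length) := by
        have := congrArg (fun l => List.drop x.length l) hsplit
        simpa [List.drop_left, List.drop_append,
          List.drop_eq_nil_of_le (le_of_lt hlt)] using this
      rw [hyeq]
      exact (List.drop_sublist _ _).trans h2

lemma wpow_succ' (w : List α) (s : ℕ) : wpow w (s + 1) = w ++ wpow w s := by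
  simp [wpow, List.replicate_succ]

lemma isUniversal_wpow {k : ℕ} {w : List α} (hw : IsUniversal k w) :
    ∀ s : ℕ, IsUniversal (s * k) (wpow w s) := by
  intro s
  induction s with
  | zero => simpa [wpow] using isUniversal_zero' ([] : List α)
  | succ s ih =>
    have := IsUniversal.append' hw ih
    rw [wpow_succ']
    have hmul : (s + 1) * k = k + s * k := by ring
    rw [hmul]
    exact this

lemma not_isUniversal_wpow [Nonempty α] {w : List α} {k : ℕ}
    (hk : univIndex w = k) :
    ∀ s : ℕ, 1 ≤ s → ¬ IsUniversal (s * (k + 1)) (wpow w s) := by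
  intro s hs
  induction s, hs using Nat.le_induction with
  | base =>
    intro h
    have h1 : wpow w 1 = w := by simp [wpow]
    rw [h1, one_mul] at h
    have := (isUniversal_iff_le w).mp h
    omega
  | succ s hs ih =>
    intro h
    rw [wpow_succ'] at h
    have hq : 1 ≤ s * (k + 1) := Nat.mul_pos hs (Nat.succ_pos k)
    have hEq : (s + 1) * (k + 1) = k + (s * (k + 1) - 1) + 2 := by
      have : (s + 1) * (k + 1) = s * (k + 1) + (k + 1) := by ring
      omega
    rw [hEq] at h
    rcases isUniversal_append_split h with h1 | h2
    · have := (isUniversal_iff_le w).mp h1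
      omega
    · have h3 : s * (k + 1) - 1 + 1 = s * (k + 1) := by omega
      rw [h3] at h2
      exact ih h2

end Aux

theorem univIndex_pow_bounds [Fintype α] (w : List α) (k : ℕ)
    (hk : univIndex w = k) (hk1 : 1 ≤ k) (s : ℕ) (hs : 1 ≤ s) :
    s * k ≤ univIndex (wpow w s) ∧ univIndex (wpow w s) ≤ s * k + s - 1 := by
  have hne : Nonempty α := by
    by_contra hemp
    have hall : ∀ m, IsUniversal m w := by
      intro m u hu
      cases u with
      | nil => exact List.nil_sublist w
      | cons a _ => exact absurd ⟨a⟩ hemp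
    have hb : ¬ BddAbove {k | IsUniversal k w} := by
      rintro ⟨b, hb⟩
      have := hb (hall (b + 1))
      omega
    have h0 := csSup_of_not_bddAbove hb
    unfold univIndex at hk
    rw [h0, csSup_empty] at hk
    simp at hk
    omega
  have hw : IsUniversal k w := (isUniversal_iff_le w).mpr (le_of_eq hk.symm)
  constructor
  · exact (isUniversal_iff_le _).mp (isUniversal_wpow hw s)
  · have hq : 1 ≤ s * (k + 1) := Nat.mul_pos hs (Nat.succ_pos k)
    have h1 : univIndex (wpow w s) ≤ s * (k + 1) - 1 := by
      unfold univIndex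
      refine csSup_le ⟨0, isUniversal_zero' (wpow w s)⟩ fun m hm => ?_
      by_contra hlt
      push_neg at hlt
      have h2 : IsUniversal (s * (k + 1)) (wpow w s) :=
        IsUniversal.mono' hm (by omega)
      exact not_isUniversal_wpow hk s hs h2
    have h3 : s * (k + 1) = s * k + s := by ring
    omega
end

section
/- Let u, w be words over Σ with ι(w) = k ≥ 1 and ι(u) = ℓ ≥ 1. Then ι(wu) = k + ℓ + 1 if and only if alph(r(w)·r(u^R)) = Σ, where r denotes the remainder of the arch factorization. -/
open List

variable {α : Type*}

set_option linter.unusedSectionVars false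
set_option linter.deprecated false

section Aux
variable [Fintype α] [DecidableEq α]

lemma isUniversal_mono [Nonempty α] {w : List α} {k m : ℕ} (h : IsUniversal m w)
    (hk : k ≤ m) : IsUniversal k w := by
  intro v hv
  obtain ⟨a⟩ := ‹Nonempty α›
  have h2 := h (v ++ List.replicate (m - k) a) (by simp [hv]; omega)
  exact (v.sublist_append_left _).trans h2

lemma isUniversal_length_le [Nonempty α] {w : List α} {m : ℕ} (h : IsUniversal m w) :
    m ≤ w.length := by
  obtain ⟨a⟩ := ‹Nonempty α›
  simpa using (h (List.replicate m a) (by simp)).length_le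

lemma univIndex_eq_iff [Nonempty α] {w : List α} {m : ℕ} :
    univIndex w = m ↔ IsUniversal m w ∧ ¬ IsUniversal (m+1) w := by
  have h0 : IsUniversal 0 w := by
    intro v hv
    rw [List.length_eq_zero_iff] at hv
    simp [hv]
  have hbdd : BddAbove {k | IsUniversal k w} := ⟨w.length, fun k hk => isUniversal_length_le hk⟩
  have hne : Set.Nonempty {k | IsUniversal k w} := ⟨0, h0⟩
  unfold univIndex
  constructor
  · rintro rfl
    refine ⟨Nat.sSup_mem hne hbdd, fun hcon => ?_⟩
    have := le_csSup hbdd hcon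
    omega
  · rintro ⟨h1, h2⟩
    refine le_antisymm (csSup_le hne fun k hk => ?_) (le_csSup hbdd h1)
    by_contra hlt
    exact h2 (isUniversal_mono hk (by omega))

lemma sublist_append_of_full {L : List (List α)} {v t s : List α}
    (hL : ∀ x ∈ L, x.toFinset = Finset.univ) (hv : v.length ≤ L.length) (hst : s <+ t) :
    v ++ s <+ L.flatten ++ t := by
  induction L generalizing v s t with
  | nil =>
    simp only [List.length_nil, Nat.le_zero, List.length_eq_zero_iff] at hv
    simpa [hv]
  | cons x L ih =>
    cases v with
    | nil =>
      simpa using hst.trans (List.sublist_append_right ((x :: L).flatten) t)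
    | cons a v =>
      have hax : a ∈ x := by
        have := hL x (List.mem_cons_self)
        rw [← List.mem_toFinset, this]
        exact Finset.mem_univ a
      obtain ⟨x₁, x₂, rfl⟩ := List.append_of_mem hax
      have hrec : v ++ s <+ L.flatten ++ t := by
        apply ih (fun y hy => hL y (List.mem_cons_of_mem _ hy)) _ hst
        simpa using Nat.le_of_succ_le_succ hv
      have h1 : (a :: v) ++ s <+ a :: (x₂ ++ (L.flatten ++ t)) := by
        rw [List.cons_append, List.cons_sublist_cons]
        exact hrec.trans (List.sublist_append_right _ _)
      have h2 : a :: (x₂ ++ (L.flatten ++ t)) <+ ((x₁ ++ a :: x₂) ++ L.flatten) ++ t := by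
        have heq : ((x₁ ++ a :: x₂) ++ L.flatten) ++ t
            = x₁ ++ (a :: (x₂ ++ (L.flatten ++ t))) := by simp
        rw [heq]
        exact List.sublist_append_right _ _
      simpa using h1.trans h2

lemma cons_sublist_of_not_mem {a : α} {y z r : List α} (ha : a ∉ y) (h : a :: z <+ y ++ r) :
    a :: z <+ r := by
  induction y with
  | nil => simpa using h
  | cons b y ih =>
    rw [List.cons_append] at h
    cases h with
    | cons _ h => exact ih (fun hm => ha (List.mem_cons_of_mem _ hm)) h
    | cons_cons _ h => exact absurd (List.mem_cons_self) ha

lemma greedy_sublist {L : List (List α)} {v s t : List α}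
    (hF : List.Forall₂ (fun (a : α) (x : List α) => ∃ y, x = y ++ [a] ∧ a ∉ y) v L)
    (h : v ++ s <+ L.flatten ++ t) : s <+ t := by
  induction hF generalizing s t with
  | nil => simpa using h
  | @cons a x v L hax hF ih =>
    obtain ⟨y, rfl, hay⟩ := hax
    have h' : a :: (v ++ s) <+ y ++ ([a] ++ (L.flatten ++ t)) := by
      simpa [List.flatten_cons] using h
    have h2 := cons_sublist_of_not_mem hay h'
    rw [List.singleton_append, List.cons_sublist_cons] at h2
    exact ih h2

lemma exists_forall₂ {β : Type*} {R : α → β → Prop} :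
    ∀ (L : List β), (∀ x ∈ L, ∃ a, R a x) → ∃ v, List.Forall₂ R v L := by
  intro L
  induction L with
  | nil => exact fun _ => ⟨[], List.Forall₂.nil⟩
  | cons x L ih =>
    intro h
    obtain ⟨a, ha⟩ := h x (List.mem_cons_self)
    obtain ⟨v, hv⟩ := ih fun y hy => h y (List.mem_cons_of_mem _ hy)
    exact ⟨a :: v, List.Forall₂.cons ha hv⟩

lemma archesAux_spec [Nonempty α] : ∀ (n : ℕ) (w : List α), w.length ≤ n →
    w = (archesAux n w).flatten ++ remAux n w ∧
    (remAux n w).toFinset ≠ Finset.univ ∧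
    ∀ x ∈ archesAux n w, x.toFinset = Finset.univ ∧ ∃ y a, x = y ++ [a] ∧ a ∉ y := by
  intro n
  induction n with
  | zero =>
    intro w hw
    rw [Nat.le_zero, List.length_eq_zero_iff] at hw
    subst hw
    refine ⟨by simp [archesAux, remAux], ?_, by simp [archesAux]⟩
    simp only [remAux, List.toFinset_nil]
    intro hcon
    have := Finset.univ_nonempty (α := α)
    rw [← hcon] at this
    simp at this
  | succ n ih =>
    intro w hw
    cases hfind : (List.range' 1 w.length).find?
        (fun m => decide ((w.take m).toFinset = Finset.univ)) with
    | none =>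
      have hrm : remAux (n+1) w = w := by rw [remAux, hfind]
      have har : archesAux (n+1) w = [] := by rw [archesAux, hfind]
      refine ⟨by simp [hrm, har], ?_, by simp [har]⟩
      rw [hrm]
      intro hcon
      rw [List.find?_eq_none] at hfind
      have hw0 : w ≠ [] := by
        intro h
        subst h
        have := Finset.univ_nonempty (α := α)
        rw [← hcon] at this
        simp at this
      have hlen : 1 ≤ w.length := List.length_pos_iff.mpr hw0
      exact hfind w.length (by rw [List.mem_range'_1]; omega) (by simpa using hcon)
    | some m =>
      have hrm : remAux (n+1) w = remAux n (w.drop m) := by rw [remAux, hfind]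
      have har : archesAux (n+1) w = w.take m :: archesAux n (w.drop m) := by
        rw [archesAux, hfind]
      rw [List.find?_range'_eq_some] at hfind
      obtain ⟨hpm, hmem, hmin⟩ := hfind
      rw [List.mem_range'_1] at hmem
      have hfull : (w.take m).toFinset = Finset.univ := of_decide_eq_true hpm
      have hmlt : m - 1 < w.length := by omega
      obtain ⟨hd, hr, ha⟩ := ih (w.drop m) (by rw [List.length_drop]; omega)
      have heq : w.take m = w.take (m-1) ++ [w.get ⟨m-1, hmlt⟩] := by
        have hm : m = (m-1)+1 := by omega
        conv_lhs => rw [hm]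
        rw [List.take_succ, List.getElem?_eq_getElem hmlt]
        simp
      refine ⟨?_, by rwa [hrm], ?_⟩
      · rw [har, hrm, List.flatten_cons, List.append_assoc, ← hd, List.take_append_drop]
      · intro x hx
        rw [har, List.mem_cons] at hx
        rcases hx with rfl | hx
        · refine ⟨hfull, w.take (m-1), w.get ⟨m-1, hmlt⟩, heq, ?_⟩
          intro hcon
          have htf : (w.take (m-1)).toFinset = Finset.univ := by
            rw [heq, List.toFinset_append] at hfull
            rw [← hfull]
            refine (Finset.union_eq_left.mpr ?_).symm
            intro z hz
            simp only [List.toFinset_cons, List.toFinset_nil, Finset.mem_insert,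
              Finset.notMem_empty, or_false] at hz
            subst hz
            exact List.mem_toFinset.mpr hcon
          rcases Nat.eq_zero_or_pos (m-1) with h0 | h1
          · rw [h0] at htf
            have := Finset.univ_nonempty (α := α)
            rw [← htf] at this
            simp at this
          · have := hmin (m-1) h1 (by omega)
            rw [Bool.not_eq_true'] at this
            exact absurd htf (by simpa using this)
        · exact ha x hx

lemma arch_decomp [Nonempty α] (w : List α) :
    w = (arches w).flatten ++ rem w ∧ (rem w).toFinset ≠ Finset.univ ∧
    ∀ x ∈ arches w, x.toFinset = Finset.univ ∧ ∃ y a, x = y ++ [a] ∧ a ∉ y :=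
  archesAux_spec w.length w le_rfl

lemma univIndex_arches [Nonempty α] (w : List α) : univIndex w = (arches w).length := by
  obtain ⟨hdec, hrem, harch⟩ := arch_decomp w
  rw [univIndex_eq_iff]
  constructor
  · intro v hv
    have h := sublist_append_of_full (L := arches w) (t := rem w) (v := v) (s := [])
      (fun x hx => (harch x hx).1) (le_of_eq hv) (List.nil_sublist _)
    rw [List.append_nil] at h
    rwa [← hdec] at h
  · intro hcon
    obtain ⟨A, hA⟩ := exists_forall₂ (R := fun (a : α) (x : List α) => ∃ y, x = y ++ [a] ∧ a ∉ y)
      (arches w) (fun x hx => by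
        obtain ⟨y, a, h1, h2⟩ := (harch x hx).2
        exact ⟨a, y, h1, h2⟩)
    obtain ⟨c, hc⟩ : ∃ c, c ∉ (rem w).toFinset := by
      by_contra h
      push_neg at h
      exact hrem (Finset.eq_univ_iff_forall.mpr h)
    have hsub := hcon (A ++ [c]) (by simp [hA.length_eq])
    rw [hdec] at hsub
    have h2 := greedy_sublist hA hsub
    have hcm : c ∈ rem w := h2.subset (List.mem_singleton_self c)
    exact hc (List.mem_toFinset.mpr hcm)

lemma isUniversal_reverse {k : ℕ} {w : List α} :
    IsUniversal k w.reverse ↔ IsUniversal k w := by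
  constructor <;> intro h v hv
  · have h1 := h v.reverse (by simpa using hv)
    have h2 := List.reverse_sublist.mpr h1
    simpa using h2
  · have h1 := h v.reverse (by simpa using hv)
    have h2 := List.reverse_sublist.mpr h1
    simpa using h2

lemma univIndex_reverse (w : List α) : univIndex w.reverse = univIndex w := by
  unfold univIndex
  congr 1
  ext k
  exact isUniversal_reverse

end Aux

theorem univIndex_append_succ_iff [Fintype α] [DecidableEq α] (w u : List α) (k ℓ : ℕ)
    (hw : univIndex w = k) (hk1 : 1 ≤ k) (hu : univIndex u = ℓ) (hl1 : 1 ≤ ℓ) :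
    univIndex (w ++ u) = k + ℓ + 1 ↔
      (rem w ++ rem u.reverse).toFinset = Finset.univ := by
  have hne : Nonempty α := by
    by_contra h
    rw [not_nonempty_iff] at h
    have hall : ∀ k', IsUniversal k' w := by
      intro k' v hv
      have hv0 : v = [] := by
        cases v with
        | nil => rfl
        | cons a _ => exact (h.false a).elim
      simp [hv0]
    have hnb : ¬ BddAbove {k' | IsUniversal k' w} := by
      rintro ⟨b, hb⟩
      have := hb (hall (b+1))
      omega
    unfold univIndex at hw
    rw [csSup_of_not_bddAbove hnb, csSup_empty] at hw
    simp at hw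
    omega
  obtain ⟨hdw, hrw, haw⟩ := arch_decomp w
  obtain ⟨hdu, hru, hau⟩ := arch_decomp u.reverse
  have hkw : (arches w).length = k := by rw [← univIndex_arches, hw]
  have hlu : (arches u.reverse).length = ℓ := by
    rw [← univIndex_arches, univIndex_reverse, hu]
  have hudec : u = (rem u.reverse).reverse ++ (arches u.reverse).flatten.reverse := by
    rw [← List.reverse_append, ← hdu, List.reverse_reverse]
  have hwu : w ++ u = (arches w).flatten ++
      ((rem w ++ (rem u.reverse).reverse) ++ (arches u.reverse).flatten.reverse) := by
    conv_lhs => rw [hdw, hudec]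
    simp [List.append_assoc]
  set M := rem w ++ (rem u.reverse).reverse with hM
  have hMfin : M.toFinset = (rem w ++ rem u.reverse).toFinset := by
    simp [hM, List.toFinset_append]
  constructor
  · intro h
    by_contra hcon
    obtain ⟨c, hc⟩ : ∃ c, c ∉ (rem w ++ rem u.reverse).toFinset := by
      by_contra h'
      push_neg at h'
      exact hcon (Finset.eq_univ_iff_forall.mpr h')
    obtain ⟨A, hA⟩ := exists_forall₂
      (R := fun (a : α) (x : List α) => ∃ y, x = y ++ [a] ∧ a ∉ y)
      (arches w) (fun x hx => by
        obtain ⟨y, a, h1, h2⟩ := (haw x hx).2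
        exact ⟨a, y, h1, h2⟩)
    obtain ⟨B, hB⟩ := exists_forall₂
      (R := fun (a : α) (x : List α) => ∃ y, x = y ++ [a] ∧ a ∉ y)
      (arches u.reverse) (fun x hx => by
        obtain ⟨y, a, h1, h2⟩ := (hau x hx).2
        exact ⟨a, y, h1, h2⟩)
    have hU : IsUniversal (k+ℓ+1) (w ++ u) := (univIndex_eq_iff.mp h).1
    have hlen : (A ++ c :: B.reverse).length = k + ℓ + 1 := by
      simp [hA.length_eq, hB.length_eq, hkw, hlu]
      omega
    have hsub := hU _ hlen
    rw [hwu] at hsub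
    have hsub2 : c :: B.reverse <+ M ++ (arches u.reverse).flatten.reverse :=
      greedy_sublist hA hsub
    have hsub3 : B ++ [c] <+ (arches u.reverse).flatten ++ M.reverse := by
      have h3 := List.reverse_sublist.mpr hsub2
      simpa using h3
    have hsub4 := greedy_sublist hB hsub3
    have hcmem : c ∈ M.reverse := hsub4.subset (List.mem_singleton_self c)
    apply hc
    rw [← hMfin, List.mem_toFinset]
    simpa using hcmem
  · intro hfull
    rw [univIndex_eq_iff]
    constructor
    · intro v hv
      set L : List (List α) := arches w ++ M :: (arches u.reverse).reverse.map List.reverse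
        with hL
      have hLlen : L.length = k + ℓ + 1 := by
        simp [hL, hkw, hlu]
        omega
      have hLfull : ∀ x ∈ L, x.toFinset = Finset.univ := by
        intro x hx
        rw [hL, List.mem_append, List.mem_cons] at hx
        rcases hx with hx | rfl | hx
        · exact (haw x hx).1
        · rw [hMfin]
          exact hfull
        · rw [List.mem_map] at hx
          obtain ⟨z, hz, rfl⟩ := hx
          rw [List.mem_reverse] at hz
          rw [List.toFinset_reverse]
          exact (hau z hz).1
      have hjoin : L.flatten = w ++ u := by
        rw [hL, List.flatten_append, List.flatten_cons, hwu]
        congr 2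
        rw [List.map_reverse]
        exact (List.reverse_flatten).symm
      have h := sublist_append_of_full (L := L) (v := v) (s := ([] : List α))
        (t := ([] : List α)) hLfull (by omega) (List.Sublist.refl _)
      simpa [hjoin] using h
    · have hw2 := (univIndex_eq_iff.mp hw).2
      have hu2 := (univIndex_eq_iff.mp hu).2
      unfold IsUniversal at hw2 hu2
      push_neg at hw2 hu2
      obtain ⟨v1, hv1len, hv1⟩ := hw2
      obtain ⟨v2, hv2len, hv2⟩ := hu2
      intro hcon
      have hsub := hcon (v1 ++ v2) (by simp [hv1len, hv2len]; omega)
      rw [List.sublist_append_iff] at hsub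
      obtain ⟨l1, l2, heq, hs1, hs2⟩ := hsub
      rcases List.append_eq_append_iff.mp heq with ⟨a', ha1, _⟩ | ⟨c', _, hc2⟩
      · exact hv1 ((List.sublist_append_left v1 a').trans (ha1 ▸ hs1))
      · exact hv2 ((List.sublist_append_right c' v2).trans (hc2 ▸ hs2))
end

section
/- Let w be a word over Σ with ι(w) ≥ 1, and let s, t ∈ ℕ₀. If alph(r(w^s)) = alph(r(w^t)) then r(w^{s+i}) = r(w^{t+i}) for all i ≥ 1. -/
open List

variable {α : Type*}

lemma find?_range'_spec (p : ℕ → Bool) :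
    ∀ (n a : ℕ),
      ((List.range' a n).find? p = none ∧ ∀ k, a ≤ k → k < a + n → ¬ p k = true) ∨
      ∃ m, (List.range' a n).find? p = some m ∧ a ≤ m ∧ m < a + n ∧ p m = true ∧
        ∀ k, a ≤ k → k < m → ¬ p k = true := by
  intro n
  induction n with
  | zero => intro a; left; constructor; · rfl
            · intro k h1 h2; omega
  | succ n ih =>
    intro a
    rw [List.range'_succ]
    by_cases hpa : p a = true
    · right
      exact ⟨a, by rw [List.find?_cons_of_pos hpa], le_refl a, by omega, hpa,
        fun k h1 h2 => by omega⟩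
    · rcases ih (a + 1) with ⟨h1, h2⟩ | ⟨m, h1, h2, h3, h4, h5⟩
      · left
        refine ⟨by rw [List.find?_cons_of_neg hpa, h1], fun k hk1 hk2 => ?_⟩
        rcases eq_or_lt_of_le hk1 with rfl | hk
        · exact hpa
        · exact h2 k hk (by omega)
      · right
        refine ⟨m, by rw [List.find?_cons_of_neg hpa, h1], by omega, by omega, h4,
          fun k hk1 hk2 => ?_⟩
        rcases eq_or_lt_of_le hk1 with rfl | hk
        · exact hpa
        · exact h5 k hk hk2

lemma remAux_nil [Fintype α] [DecidableEq α] : ∀ n, remAux n ([] : List α) = [] := by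
  intro n; cases n with
  | zero => rfl
  | succ n => simp [remAux]

lemma remAux_eq_of_le [Fintype α] [DecidableEq α] :
    ∀ n m (w : List α), w.length ≤ n → w.length ≤ m → remAux n w = remAux m w := by
  intro n
  induction n with
  | zero =>
    intro m w h1 _
    have : w = [] := List.length_eq_zero_iff.mp (Nat.le_zero.mp h1)
    subst this; rw [remAux_nil, remAux_nil]
  | succ n ih =>
    intro m w h1 h2
    rcases w.eq_nil_or_concat with rfl | _
    · rw [remAux_nil, remAux_nil]
    · have hlen : 1 ≤ w.length := by
        rcases ‹∃ _, _› with ⟨l, a, rfl⟩; simp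
      obtain ⟨m', rfl⟩ : ∃ m', m = m' + 1 := ⟨m - 1, by omega⟩
      show remAux (n+1) w = remAux (m'+1) w
      rw [remAux, remAux]
      cases hf : (List.range' 1 w.length).find?
          (fun m => decide ((w.take m).toFinset = Finset.univ)) with
      | none => rfl
      | some k =>
        have hk := List.mem_range'.mp (List.mem_of_find?_eq_some hf)
        have : (w.drop k).length = w.length - k := by simp
        exact ih m' (w.drop k) (by omega) (by omega)

lemma rem_of_some [Fintype α] [DecidableEq α] {w : List α} {m : ℕ}
    (hf : (List.range' 1 w.length).find?
        (fun m => decide ((w.take m).toFinset = Finset.univ)) = some m) :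
    rem w = rem (w.drop m) := by
  have hk := List.mem_range'.mp (List.mem_of_find?_eq_some hf)
  obtain ⟨n, hn⟩ : ∃ n, w.length = n + 1 := ⟨w.length - 1, by omega⟩
  show remAux w.length w = rem (w.drop m)
  rw [hn, remAux, hf]
  show remAux n (w.drop m) = remAux (w.drop m).length (w.drop m)
  exact remAux_eq_of_le n _ _ (by simp; omega) (le_refl _)

lemma rem_of_none [Fintype α] [DecidableEq α] {w : List α}
    (hf : (List.range' 1 w.length).find?
        (fun m => decide ((w.take m).toFinset = Finset.univ)) = none) :
    rem w = w := by
  cases hn : w.length with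
  | zero => show remAux w.length w = w; rw [hn]; rfl
  | succ n => show remAux w.length w = w; rw [hn, remAux]; rw [hf]

lemma rem_spec [Fintype α] [DecidableEq α] (w : List α) :
    (rem w = w ∧ ∀ k, 1 ≤ k → k ≤ w.length → (w.take k).toFinset ≠ Finset.univ) ∨
    ∃ m, 1 ≤ m ∧ m ≤ w.length ∧ (w.take m).toFinset = Finset.univ ∧
      (∀ k, 1 ≤ k → k < m → (w.take k).toFinset ≠ Finset.univ) ∧
      rem w = rem (w.drop m) := by
  rcases find?_range'_spec (fun m => decide ((w.take m).toFinset = Finset.univ))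
      w.length 1 with ⟨h1, h2⟩ | ⟨m, h1, h2, h3, h4, h5⟩
  · left
    refine ⟨rem_of_none h1, fun k hk1 hk2 => ?_⟩
    have := h2 k hk1 (by omega)
    simpa using this
  · right
    refine ⟨m, h2, by omega, by simpa using h4, fun k hk1 hk2 => ?_, rem_of_some h1⟩
    have := h5 k hk1 hk2
    simpa using this

lemma rem_nil [Fintype α] [DecidableEq α] : rem ([] : List α) = [] := rfl

lemma rem_no_full_prefix_aux [Fintype α] [DecidableEq α] :
    ∀ n (w : List α), w.length ≤ n →
      ∀ k, 1 ≤ k → k ≤ (rem w).length → ((rem w).take k).toFinset ≠ Finset.univ := by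
  intro n
  induction n with
  | zero =>
    intro w h1 k hk1 hk2
    have : w = [] := List.length_eq_zero_iff.mp (Nat.le_zero.mp h1)
    subst this; rw [rem_nil] at hk2; simp at hk2; omega
  | succ n ih =>
    intro w h1 k hk1 hk2
    rcases rem_spec w with ⟨heq, hpre⟩ | ⟨m, hm1, hm2, _, _, hstep⟩
    · rw [heq] at hk2 ⊢; exact hpre k hk1 hk2
    · rw [hstep] at hk2 ⊢
      exact ih (w.drop m) (by simp; omega) k hk1 hk2

lemma rem_no_full_prefix [Fintype α] [DecidableEq α] (w : List α) :
    ∀ k, 1 ≤ k → k ≤ (rem w).length → ((rem w).take k).toFinset ≠ Finset.univ :=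
  rem_no_full_prefix_aux w.length w (le_refl _)

lemma rem_append_aux [Fintype α] [DecidableEq α] :
    ∀ n (x y : List α), x.length ≤ n → rem (x ++ y) = rem (rem x ++ y) := by
  intro n
  induction n with
  | zero =>
    intro x y h1
    have : x = [] := List.length_eq_zero_iff.mp (Nat.le_zero.mp h1)
    subst this; rw [rem_nil]
  | succ n ih =>
    intro x y h1
    rcases rem_spec x with ⟨heq, _⟩ | ⟨m, hm1, hm2, hfull, hmin, hstep⟩
    · rw [heq]
    · -- first arch of x ++ y is the first arch of x
      have hx : rem (x ++ y) = rem ((x ++ y).drop m) := by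
        apply rem_of_some
        rcases find?_range'_spec
            (fun k => decide (((x ++ y).take k).toFinset = Finset.univ))
            (x ++ y).length 1 with ⟨h1', h2'⟩ | ⟨m₁, g1, g2, g3, g4, g5⟩
        · exfalso
          have hmem : ((x ++ y).take m).toFinset = Finset.univ := by
            rw [List.take_append, Nat.sub_eq_zero_of_le hm2]
            simpa using hfull
          have := h2' m hm1 (by simp; omega)
          simp [hmem] at this
        · -- m₁ = m
          have hm1full : ((x ++ y).take m).toFinset = Finset.univ := by
            rw [List.take_append, Nat.sub_eq_zero_of_le hm2]
            simpa using hfull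
          have hle : m₁ ≤ m := by
            by_contra hc
            exact g5 m hm1 (by omega) (by simp [hm1full])
          have hm₁full : ((x ++ y).take m₁).toFinset = Finset.univ := by simpa using g4
          rw [List.take_append,
            Nat.sub_eq_zero_of_le (le_trans hle hm2)] at hm₁full
          simp at hm₁full
          have : ¬ m₁ < m := fun hc => hmin m₁ g2 hc hm₁full
          have : m₁ = m := by omega
          rw [this] at g1; exact g1
      have hdrop : (x ++ y).drop m = x.drop m ++ y := by
        rw [List.drop_append, Nat.sub_eq_zero_of_le hm2, List.drop_zero]
      rw [hx, hdrop, ih (x.drop m) y (by simp; omega), hstep]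

lemma rem_append [Fintype α] [DecidableEq α] (x y : List α) :
    rem (x ++ y) = rem (rem x ++ y) :=
  rem_append_aux x.length x y (le_refl _)

lemma rem_append_of_no_full [Fintype α] [DecidableEq α] (u y : List α)
    (hu : ∀ k, 1 ≤ k → k ≤ u.length → (u.take k).toFinset ≠ Finset.univ)
    (m₀ : ℕ) (hm1 : 1 ≤ m₀) (hm2 : m₀ ≤ y.length)
    (hfull : u.toFinset ∪ (y.take m₀).toFinset = Finset.univ)
    (hmin : ∀ k, 1 ≤ k → k < m₀ → u.toFinset ∪ (y.take k).toFinset ≠ Finset.univ) :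
    rem (u ++ y) = rem (y.drop m₀) := by
  have hdrop : (u ++ y).drop (u.length + m₀) = y.drop m₀ := by
    rw [List.drop_append]
    have h1 : u.length + m₀ - u.length = m₀ := by omega
    rw [List.drop_eq_nil_of_le (by omega), h1, List.nil_append]
  have htake : ∀ j, ((u ++ y).take (u.length + j)).toFinset
      = u.toFinset ∪ (y.take j).toFinset := by
    intro j
    rw [List.take_append]
    have h1 : u.length + j - u.length = j := by omega
    rw [List.take_of_length_le (by omega), h1, List.toFinset_append]
  have htake' : ∀ j, j ≤ u.length → (u ++ y).take j = u.take j := by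
    intro j hj
    rw [List.take_append, Nat.sub_eq_zero_of_le hj, List.take_zero,
      List.append_nil]
  rw [← hdrop]
  apply rem_of_some
  rcases find?_range'_spec
      (fun k => decide (((u ++ y).take k).toFinset = Finset.univ))
      (u ++ y).length 1 with ⟨h1', h2'⟩ | ⟨m₁, g1, g2, g3, g4, g5⟩
  · exfalso
    have := h2' (u.length + m₀) (by omega) (by simp; omega)
    rw [htake m₀] at this
    simp [hfull] at this
  · have hcond : ((u ++ y).take (u.length + m₀)).toFinset = Finset.univ := by
      rw [htake m₀]; exact hfull
    have hle : m₁ ≤ u.length + m₀ := by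
      by_contra hc
      exact g5 (u.length + m₀) (by omega) (by omega) (by simp [hcond])
    have hm₁full : ((u ++ y).take m₁).toFinset = Finset.univ := by simpa using g4
    have hgt : u.length < m₁ := by
      by_contra hc
      push_neg at hc
      rw [htake' m₁ hc] at hm₁full
      exact hu m₁ g2 hc hm₁full
    obtain ⟨j, rfl⟩ : ∃ j, m₁ = u.length + j := ⟨m₁ - u.length, by omega⟩
    rw [htake j] at hm₁full
    have : ¬ j < m₀ := fun hc => hmin j (by omega) hc hm₁full
    have : j = m₀ := by omega
    subst this; exact g1

lemma wpow_add_aux' (w : List α) (a b : ℕ) : wpow w (a + b) = wpow w a ++ wpow w b := by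
  simp only [wpow, List.replicate_add, List.flatten_append]

lemma wpow_succ_aux' (w : List α) (b : ℕ) : wpow w (b + 1) = w ++ wpow w b := by
  simp only [wpow, List.replicate_succ, List.flatten_cons]

theorem rem_pow_eventually_periodic [Fintype α] [DecidableEq α] (w : List α)
    (hw : 1 ≤ univIndex w) (s t : ℕ)
    (h : (rem (wpow w s)).toFinset = (rem (wpow w t)).toFinset) :
    ∀ i : ℕ, 1 ≤ i → rem (wpow w (s + i)) = rem (wpow w (t + i)) := by
  intro i hi
  rcases isEmpty_or_nonempty α with hα | hα
  · have hnil : ∀ l : List α, l = [] := by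
      intro l; cases l with
      | nil => rfl
      | cons a _ => exact absurd trivial (hα.false a).elim
    rw [hnil (wpow w (s+i)), hnil (wpow w (t+i))]
  · -- the alphabet of w is the whole alphabet
    obtain ⟨a⟩ := hα
    have hbdd : BddAbove {k | IsUniversal k w} := by
      refine ⟨w.length, fun k hk => ?_⟩
      have := (hk (List.replicate k a) (by simp)).length_le
      simpa using this
    have hne : Set.Nonempty {k | IsUniversal k w} :=
      ⟨0, fun u hu => by simp [List.length_eq_zero_iff.mp hu]⟩
    have hmem : IsUniversal (univIndex w) w := Nat.sSup_mem hne hbdd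
    have hmemw : ∀ b : α, b ∈ w := by
      intro b
      have hsub := hmem (List.replicate (univIndex w) b) (by simp)
      exact hsub.subset (by simp; omega)
    have hwuniv : w.toFinset = Finset.univ :=
      Finset.eq_univ_iff_forall.mpr fun b => List.mem_toFinset.mpr (hmemw b)
    have hwlen : 1 ≤ w.length := by
      cases w with
      | nil => exact absurd (hmemw a) List.not_mem_nil
      | cons _ _ => simp
    -- set up
    set y := wpow w i with hy
    have hyw : w.length ≤ y.length := by
      obtain ⟨i', rfl⟩ : ∃ i', i = i' + 1 := ⟨i - 1, by omega⟩
      rw [hy, wpow_succ_aux', List.length_append]; omega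
    have hytake : y.take w.length = w := by
      obtain ⟨i', rfl⟩ : ∃ i', i = i' + 1 := ⟨i - 1, by omega⟩
      rw [hy, wpow_succ_aux', List.take_left]
    set u := rem (wpow w s) with hu
    set u' := rem (wpow w t) with hu'
    -- find the minimal m₀
    rcases find?_range'_spec
        (fun m => decide (u.toFinset ∪ (y.take m).toFinset = Finset.univ))
        y.length 1 with ⟨h1', h2'⟩ | ⟨m₀, g1, g2, g3, g4, g5⟩
    · exfalso
      have := h2' w.length hwlen (by omega)
      rw [hytake] at this
      simp [hwuniv] at this
    · have hfull : u.toFinset ∪ (y.take m₀).toFinset = Finset.univ := by simpa using g4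
      have hmin : ∀ k, 1 ≤ k → k < m₀ → u.toFinset ∪ (y.take k).toFinset ≠ Finset.univ :=
        fun k hk1 hk2 hc => g5 k hk1 hk2 (by simp [hc])
      have e1 : rem (wpow w (s + i)) = rem (y.drop m₀) := by
        rw [wpow_add_aux', rem_append, ← hu, ← hy]
        exact rem_append_of_no_full u y (rem_no_full_prefix _) m₀ g2 (by omega) hfull hmin
      have e2 : rem (wpow w (t + i)) = rem (y.drop m₀) := by
        rw [wpow_add_aux', rem_append, ← hu', ← hy]
        refine rem_append_of_no_full u' y (rem_no_full_prefix _) m₀ g2 (by omega) ?_ ?_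
        · rw [← h]; exact hfull
        · rw [← h]; exact hmin
      rw [e1, e2]
end
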